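/- Let x, y be octonions such that ⟨u·x, y⟩ = 0 for every purely imaginary octonion u (i.e. every u with Re(u) = 0), where ⟨·,·⟩ is the standard inner product on 𝕆 ≅ ℝ⁸. Then x and y are linearly dependent over ℝ. -/

import Mathlib

open scoped RealInnerProductSpace Quaternion

noncomputable section

/-- The octonions, realized by the Cayley–Dickson construction as pairs of
quaternions, with multiplication `(a,b)(c,d) = (ac − d̄b, da + b c̄)`. -/
def octMul (p q : ℍ[ℝ] × ℍ[ℝ]) : ℍ[ℝ] × ℍ[ℝ] :=
  (p.1 * q.1 - star q.2 * p.2, q.2 * p.1 + p.2 * star q.1)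

/-- The real part of an octonion `(a,b)` is `Re a`. -/
def octRe (p : ℍ[ℝ] × ℍ[ℝ]) : ℝ := p.1.re

/-- The standard Euclidean inner product on the octonions `𝕆 ≅ ℍ × ℍ ≅ ℝ⁸`. -/
def octInner (p q : ℍ[ℝ] × ℍ[ℝ]) : ℝ := ⟪p.1, q.1⟫ + ⟪p.2, q.2⟫

lemma re_mul_comm (p q : ℍ[ℝ]) : (p * q).re = (q * p).re := by
  simp [Quaternion.re_mul]; ring

lemma quat_eq_zero_of_forall (q : ℍ[ℝ]) (h : ∀ u : ℍ[ℝ], (u * q).re = 0) : q = 0 := by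
  have := h (star q)
  rw [Quaternion.star_mul_self] at this
  exact Quaternion.normSq_eq_zero.mp (by simpa using this)

lemma quat_real_of_forall (q : ℍ[ℝ]) (h : ∀ p : ℍ[ℝ], p.re = 0 → (p * q).re = 0) :
    q = (q.re : ℍ[ℝ]) := by
  have hp : (star q - (q.re : ℍ[ℝ])).re = 0 := by simp
  have := h _ hp
  rw [sub_mul, Quaternion.star_mul_self] at this
  have h2 : Quaternion.normSq q - q.re * q.re = 0 := by
    simpa [Quaternion.re_mul] using this
  have h3 : q.imI ^ 2 + q.imJ ^ 2 + q.imK ^ 2 = 0 := by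
    have := h2
    simp [Quaternion.normSq_def'] at this
    nlinarith
  have hI : q.imI = 0 := by nlinarith [sq_nonneg q.imI, sq_nonneg q.imJ, sq_nonneg q.imK]
  have hJ : q.imJ = 0 := by nlinarith [sq_nonneg q.imI, sq_nonneg q.imJ, sq_nonneg q.imK]
  have hK : q.imK = 0 := by nlinarith [sq_nonneg q.imI, sq_nonneg q.imJ, sq_nonneg q.imK]
  ext <;> simp [hI, hJ, hK]

/-- If `x, y` are octonions such that `⟨u·x, y⟩ = 0` for every
purely imaginary octonion `u`, then `x` and `y` are linearly dependent over `ℝ`. -/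
theorem stmt13 (x y : ℍ[ℝ] × ℍ[ℝ])
    (h : ∀ u : ℍ[ℝ] × ℍ[ℝ], octRe u = 0 → octInner (octMul u x) y = 0) :
    ¬ LinearIndependent ℝ ![x, y] := by
  obtain ⟨a, b⟩ := x
  obtain ⟨c, d⟩ := y
  -- Extract (A): d * a = b * c
  have hA : d * a = b * c := by
    have key : ∀ u : ℍ[ℝ], (u * (star a * star d - star c * star b)).re = 0 := by
      intro u
      have := h (0, u) rfl
      simp only [octMul, octInner, octRe, Quaternion.inner_def] at this
      have e1 : ((0 * a - star b * u) * star c).re = -(u * (star c * star b)).re := by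
        rw [zero_mul, zero_sub, neg_mul, Quaternion.re_neg, mul_assoc, re_mul_comm,
          mul_assoc]
      have e2 : ((b * 0 + u * star a) * star d).re = (u * (star a * star d)).re := by
        rw [mul_zero, zero_add, mul_assoc]
      rw [e1, e2] at this
      rw [mul_sub, Quaternion.re_sub]
      linarith
    have h0 : star a * star d - star c * star b = 0 := quat_eq_zero_of_forall _ key
    have h1 : star a * star d = star c * star b := by
      linear_combination (norm := abel) h0
    have := congrArg star h1
    simpa [star_mul] using this
  -- Extract (B): Q := a * star c + star d * b is real
  set Q : ℍ[ℝ] := a * star c + star d * b with hQdef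
  have hB : Q = (Q.re : ℍ[ℝ]) := by
    apply quat_real_of_forall
    intro p hp
    have := h (p, 0) hp
    simp only [octMul, octInner, octRe, Quaternion.inner_def] at this
    have e1 : ((p * a - star b * 0) * star c).re = (p * (a * star c)).re := by
      rw [mul_zero, sub_zero, mul_assoc]
    have e2 : ((b * p + 0 * star a) * star d).re = (p * (star d * b)).re := by
      rw [zero_mul, add_zero, mul_assoc, re_mul_comm, mul_assoc]
    rw [e1, e2] at this
    rw [hQdef, mul_add, Quaternion.re_add]
    linarith
  set r : ℝ := Q.re with hrdef
  -- reduce to exhibiting linear dependence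
  intro hli
  by_cases hx : (a, b) = (0 : ℍ[ℝ] × ℍ[ℝ])
  · have := hli.ne_zero 0
    simp [hx] at this
  -- show (c, d) = t • (a, b) for some real t
  have key : ∃ t : ℝ, (c, d) = t • ((a, b) : ℍ[ℝ] × ℍ[ℝ]) := by
    by_cases ha : a = 0
    · -- then b ≠ 0
      have hb : b ≠ 0 := by
        intro hb; exact hx (by simp [ha, hb])
      have hc : c = 0 := by
        have : b * c = 0 := by rw [← hA, ha, mul_zero]
        rcases mul_eq_zero.mp this with h' | h'
        · exact absurd h' hb
        · exact h'
      have hdb : star d * b = (r : ℍ[ℝ]) := by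
        have := hB
        rw [hQdef, ha, zero_mul, zero_add] at this
        simpa using this
      have hNb : Quaternion.normSq b ≠ 0 := Quaternion.normSq_ne_zero.mpr hb
      set t : ℝ := r / Quaternion.normSq b with htdef
      refine ⟨t, ?_⟩
      have h1 : Quaternion.normSq b • star d = r • star b := by
        have h1' : star d * (b * star b) = (r : ℍ[ℝ]) * star b := by
          rw [← mul_assoc, hdb]
        rw [Quaternion.self_mul_star, Quaternion.mul_coe_eq_smul,
          Quaternion.coe_mul_eq_smul] at h1'
        exact h1'
      have h2 : star d = t • star b := by
        have := congrArg (fun z => ((Quaternion.normSq b)⁻¹ : ℝ) • z) h1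
        simpa [smul_smul, inv_mul_cancel₀ hNb, htdef, div_eq_mul_inv, mul_comm] using this
      have hd : d = t • b := by
        have := congrArg star h2
        simpa using this
      exact Prod.ext (by simp [hc, ha]) (by simpa using hd)
    · -- a ≠ 0
      have hNa : Quaternion.normSq a ≠ 0 := Quaternion.normSq_ne_zero.mpr ha
      set N : ℝ := Quaternion.normSq a + Quaternion.normSq b with hNdef
      have hN : N ≠ 0 := by
        have h1 : (0:ℝ) < Quaternion.normSq a :=
          lt_of_le_of_ne Quaternion.normSq_nonneg (Ne.symm hNa)
        have h2 : (0:ℝ) ≤ Quaternion.normSq b := Quaternion.normSq_nonneg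
        positivity
      -- star of hB : c * star a + star b * d = r
      have hBs : c * star a + star b * d = (r : ℍ[ℝ]) := by
        have h1 := congrArg star hB
        rw [hQdef] at h1
        simpa [star_add, star_mul] using h1
      have hca : c * star a = (r : ℍ[ℝ]) - star b * d := by
        linear_combination (norm := abel) hBs
      have e2 : Quaternion.normSq a • d = r • b - Quaternion.normSq b • d := by
        have e1 : d * (a * star a) = b * (c * star a) := by
          rw [← mul_assoc, hA, mul_assoc]
        rw [Quaternion.self_mul_star, hca, mul_sub, ← mul_assoc,
          Quaternion.self_mul_star, Quaternion.mul_coe_eq_smul,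
          Quaternion.mul_coe_eq_smul, Quaternion.coe_mul_eq_smul] at e1
        exact e1
      have hd1 : N • d = r • b := by
        rw [hNdef, add_smul, e2]; abel
      set t : ℝ := r / N with htdef
      have hd : d = t • b := by
        have := congrArg (fun z => (N⁻¹ : ℝ) • z) hd1
        simpa [smul_smul, inv_mul_cancel₀ hN, htdef, div_eq_mul_inv, mul_comm] using this
      have hd' : d = ((t : ℝ) : ℍ[ℝ]) * b := by rw [Quaternion.coe_mul_eq_smul]; exact hd
      have hc : c = t • a := by
        have hcoef : r - t * Quaternion.normSq b = Quaternion.normSq a * t := by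
          rw [htdef]; field_simp [hNdef]; ring
        have e : star b * (((t : ℝ) : ℍ[ℝ]) * b) = ((t * Quaternion.normSq b : ℝ) : ℍ[ℝ]) := by
          rw [← mul_assoc, ← Quaternion.coe_commutes, mul_assoc,
            Quaternion.star_mul_self, ← Quaternion.coe_mul]
        have h4 : c * (star a * a) = ((r : ℍ[ℝ]) - star b * d) * a := by
          rw [← mul_assoc, hca]
        rw [Quaternion.star_mul_self, hd', e] at h4
        have h5 : Quaternion.normSq a • c = Quaternion.normSq a • (t • a) := by
          rw [← Quaternion.mul_coe_eq_smul, h4, ← Quaternion.coe_sub, hcoef,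
            Quaternion.coe_mul, mul_assoc, Quaternion.coe_mul_eq_smul,
            Quaternion.coe_mul_eq_smul]
        exact smul_right_injective _ hNa h5
      exact ⟨t, Prod.ext (by simpa using hc) (by simpa using hd)⟩
  obtain ⟨t, hty⟩ := key
  have hzero : t • ((a, b) : ℍ[ℝ] × ℍ[ℝ]) + (-1 : ℝ) • ((c, d) : ℍ[ℝ] × ℍ[ℝ]) = 0 := by
    rw [hty]; module
  have := LinearIndependent.pair_iff.mp hli t (-1) hzero
  norm_num at this

end
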